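/- arXiv:1508.01056 — 2 statements merged into one kernel-verified Lean document; each statement's English description precedes it below -/
import Mathlib

section
/- Let A be an n×n real matrix, σ₁ > 0, and u, v ∈ ℝⁿ unit vectors with A v = σ₁ u and Aᵀ u = σ₁ v. Fix indices i, j with A(i,j) = 1 and let Â = A − e_i e_jᵀ be the matrix obtained by deleting the edge (i,j). Then the largest eigenvalue σ̂₁² of ÂÂᵀ, which equals the largest eigenvalue of ÂᵀÂ, satisfies σ̂₁² ≥ σ₁² − 2σ₁ u(i) v(j) + max{u(i)², v(j)²}. -/
open Matrix

/-- The set of Rayleigh quotients `zᵀ M z` of `M` over unit vectors `z`; for a real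
symmetric matrix, the largest eigenvalue is the greatest element of this set. -/
def raySet {n : ℕ} (M : Matrix (Fin n) (Fin n) ℝ) : Set ℝ :=
  {r | ∃ z : Fin n → ℝ, z ⬝ᵥ z = 1 ∧ r = z ⬝ᵥ (M *ᵥ z)}

lemma rayKey {n : ℕ} (M : Matrix (Fin n) (Fin n) ℝ) (z : Fin n → ℝ) :
    z ⬝ᵥ ((M * Mᵀ) *ᵥ z) = (Mᵀ *ᵥ z) ⬝ᵥ (Mᵀ *ᵥ z) := by
  rw [← Matrix.mulVec_mulVec, Matrix.dotProduct_mulVec, ← Matrix.mulVec_transpose]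

lemma rayKey' {n : ℕ} (M : Matrix (Fin n) (Fin n) ℝ) (z : Fin n → ℝ) :
    z ⬝ᵥ ((Mᵀ * M) *ᵥ z) = (M *ᵥ z) ⬝ᵥ (M *ᵥ z) := by
  simpa using rayKey Mᵀ z

lemma dot_cs {n : ℕ} (a b : Fin n → ℝ) : (a ⬝ᵥ b) ^ 2 ≤ (a ⬝ᵥ a) * (b ⬝ᵥ b) := by
  simpa [dotProduct, sq] using Finset.sum_mul_sq_le_sq_mul_sq Finset.univ a b

lemma dot_self_nonneg' {n : ℕ} (a : Fin n → ℝ) : 0 ≤ a ⬝ᵥ a :=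
  Finset.sum_nonneg fun _ _ => mul_self_nonneg _

/-- If `s` is a nonnegative upper bound of the Rayleigh set of `M Mᵀ`, it is also an
upper bound of the Rayleigh set of `Mᵀ M`. -/
lemma ray_ub {n : ℕ} (M : Matrix (Fin n) (Fin n) ℝ) (s : ℝ) (hs0 : 0 ≤ s)
    (h : ∀ r ∈ raySet (M * Mᵀ), r ≤ s) : ∀ r ∈ raySet (Mᵀ * M), r ≤ s := by
  rintro r ⟨w, hw, rfl⟩
  rw [rayKey']
  set t : ℝ := (M *ᵥ w) ⬝ᵥ (M *ᵥ w) with ht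
  rcases eq_or_lt_of_le (dot_self_nonneg' (M *ᵥ w)) with h0 | h0
  · rw [ht, ← h0]; exact hs0
  · -- 0 < t
    set z : Fin n → ℝ := (Real.sqrt t)⁻¹ • (M *ᵥ w) with hz
    have hst : Real.sqrt t ^ 2 = t := Real.sq_sqrt h0.le
    have hsne : Real.sqrt t ≠ 0 := by positivity
    have hz1 : z ⬝ᵥ z = 1 := by
      simp only [hz, smul_dotProduct, dotProduct_smul, smul_eq_mul]
      field_simp; exact hst.symm
    have hzval : z ⬝ᵥ ((M * Mᵀ) *ᵥ z) = ((Mᵀ *ᵥ (M *ᵥ w)) ⬝ᵥ (Mᵀ *ᵥ (M *ᵥ w))) / t := by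
      rw [rayKey]
      simp only [hz, Matrix.mulVec_smul, smul_dotProduct, dotProduct_smul,
        smul_eq_mul]
      rw [← hst]; field_simp; rw [Real.sqrt_sq (Real.sqrt_nonneg _)]
    have hle : z ⬝ᵥ ((M * Mᵀ) *ᵥ z) ≤ s := h _ ⟨z, hz1, rfl⟩
    have hcs : t ^ 2 ≤ (Mᵀ *ᵥ (M *ᵥ w)) ⬝ᵥ (Mᵀ *ᵥ (M *ᵥ w)) := by
      have := dot_cs w (Mᵀ *ᵥ (M *ᵥ w))
      rw [hw, one_mul] at this
      have heq : w ⬝ᵥ (Mᵀ *ᵥ (M *ᵥ w)) = t := by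
        rw [Matrix.mulVec_mulVec, rayKey']
      rwa [heq] at this
    have : t ^ 2 ≤ s * t := by
      calc t ^ 2 ≤ (Mᵀ *ᵥ (M *ᵥ w)) ⬝ᵥ (Mᵀ *ᵥ (M *ᵥ w)) := hcs
        _ = (z ⬝ᵥ ((M * Mᵀ) *ᵥ z)) * t := by rw [hzval]; exact (div_mul_cancel₀ _ h0.ne').symm
        _ ≤ s * t := by nlinarith [hle, h0]
    nlinarith [h0]

theorem ray_swap {n : ℕ} (M : Matrix (Fin n) (Fin n) ℝ) (s : ℝ)
    (u0 : Fin n → ℝ) (hu0 : u0 ⬝ᵥ u0 = 1)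
    (hs : IsGreatest (raySet (M * Mᵀ)) s) : IsGreatest (raySet (Mᵀ * M)) s := by
  obtain ⟨⟨z, hz1, hzs⟩, hub⟩ := hs
  have hs0 : 0 ≤ s := by
    rw [hzs, rayKey]; exact dot_self_nonneg' _
  have hub' : ∀ r ∈ raySet (Mᵀ * M), r ≤ s := ray_ub M s hs0 hub
  refine ⟨?_, hub'⟩
  rcases eq_or_lt_of_le hs0 with h0 | h0
  · -- s = 0 : use u0
    refine ⟨u0, hu0, ?_⟩
    have h1 : u0 ⬝ᵥ ((Mᵀ * M) *ᵥ u0) ≤ s := hub' _ ⟨u0, hu0, rfl⟩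
    have h2 : 0 ≤ u0 ⬝ᵥ ((Mᵀ * M) *ᵥ u0) := by rw [rayKey']; exact dot_self_nonneg' _
    linarith
  · -- s > 0 : use w = (√s)⁻¹ • Mᵀ z
    have hsval : (Mᵀ *ᵥ z) ⬝ᵥ (Mᵀ *ᵥ z) = s := by rw [← rayKey, ← hzs]
    have hst : Real.sqrt s ^ 2 = s := Real.sq_sqrt h0.le
    have hsne : Real.sqrt s ≠ 0 := by positivity
    set w : Fin n → ℝ := (Real.sqrt s)⁻¹ • (Mᵀ *ᵥ z) with hwdef
    have hw1 : w ⬝ᵥ w = 1 := by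
      simp only [hwdef, smul_dotProduct, dotProduct_smul, smul_eq_mul, hsval]
      field_simp; exact hst.symm
    refine ⟨w, hw1, ?_⟩
    have hwval : w ⬝ᵥ ((Mᵀ * M) *ᵥ w) = ((M *ᵥ (Mᵀ *ᵥ z)) ⬝ᵥ (M *ᵥ (Mᵀ *ᵥ z))) / s := by
      rw [rayKey']
      simp only [hwdef, Matrix.mulVec_smul, smul_dotProduct, dotProduct_smul,
        smul_eq_mul]
      rw [← hst]; field_simp; rw [Real.sqrt_sq (Real.sqrt_nonneg _)]
    have hle : w ⬝ᵥ ((Mᵀ * M) *ᵥ w) ≤ s := hub' _ ⟨w, hw1, rfl⟩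
    have hcs : s ^ 2 ≤ (M *ᵥ (Mᵀ *ᵥ z)) ⬝ᵥ (M *ᵥ (Mᵀ *ᵥ z)) := by
      have := dot_cs z (M *ᵥ (Mᵀ *ᵥ z))
      rw [hz1, one_mul] at this
      have heq : z ⬝ᵥ (M *ᵥ (Mᵀ *ᵥ z)) = s := by
        rw [Matrix.mulVec_mulVec, rayKey, hsval]
      rwa [heq] at this
    have hge : s ≤ w ⬝ᵥ ((Mᵀ * M) *ᵥ w) := by
      rw [hwval]
      rw [le_div_iff₀ h0]
      nlinarith
    linarith

lemma stdT_mulVec {n : ℕ} (i j : Fin n) (u : Fin n → ℝ) :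
    (Matrix.single i j (1:ℝ))ᵀ *ᵥ u = u i • (Pi.single j 1 : Fin n → ℝ) := by
  funext k
  simp only [mulVec, dotProduct, Matrix.single, Matrix.transpose_apply,
    Matrix.of_apply, Pi.smul_apply, Pi.single_apply, smul_eq_mul]
  by_cases h : j = k <;> simp [h, Finset.sum_ite_eq, eq_comm, mul_comm]

lemma std_mulVec {n : ℕ} (i j : Fin n) (v : Fin n → ℝ) :
    Matrix.single i j (1:ℝ) *ᵥ v = v j • (Pi.single i 1 : Fin n → ℝ) := by
  funext k
  simp only [mulVec, dotProduct, Matrix.single, Matrix.of_apply,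
    Pi.smul_apply, Pi.single_apply, smul_eq_mul]
  by_cases h : i = k <;> simp [h, Finset.sum_ite_eq, eq_comm, mul_comm]

/-- Deleting the existing edge `(i,j)` from `A`: the largest eigenvalue `σ̂₁²` of `AhatAhatᵀ`
(which equals the largest eigenvalue of `AhatᵀAhat`) satisfies
`σ̂₁² ≥ σ₁² − 2σ₁ u(i) v(j) + max{u(i)², v(j)²}`. -/
theorem stmt_7 {n : ℕ} (A : Matrix (Fin n) (Fin n) ℝ) (σ₁ : ℝ) (hσ : 0 < σ₁)
    (u v : Fin n → ℝ) (hu : u ⬝ᵥ u = 1) (hv : v ⬝ᵥ v = 1)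
    (hAv : A *ᵥ v = σ₁ • u) (hATu : Aᵀ *ᵥ u = σ₁ • v)
    (i j : Fin n) (hij : A i j = 1) (Ahat : Matrix (Fin n) (Fin n) ℝ)
    (hAhat : Ahat = A - Matrix.single i j 1)
    (s : ℝ) (hs : IsGreatest (raySet (Ahat * Ahatᵀ)) s) :
    IsGreatest (raySet (Ahatᵀ * Ahat)) s ∧
      s ≥ σ₁ ^ 2 - 2 * σ₁ * (u i * v j) + max (u i ^ 2) (v j ^ 2) := by
  have hswap : IsGreatest (raySet (Ahatᵀ * Ahat)) s := ray_swap Ahat s u hu hs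
  refine ⟨hswap, ?_⟩
  -- value at u for Ahat * Ahatᵀ
  have hATvec : Ahatᵀ *ᵥ u = σ₁ • v - u i • (Pi.single j 1 : Fin n → ℝ) := by
    rw [hAhat, Matrix.transpose_sub, Matrix.sub_mulVec, hATu, stdT_mulVec]
  have hAvec : Ahat *ᵥ v = σ₁ • u - v j • (Pi.single i 1 : Fin n → ℝ) := by
    rw [hAhat, Matrix.sub_mulVec, hAv, std_mulVec]
  have hsingle : ∀ (w : Fin n → ℝ) (k : Fin n), w ⬝ᵥ (Pi.single k 1 : Fin n → ℝ) = w k := by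
    intro w k
    simp [dotProduct, Pi.single_apply, mul_comm]
  have hsingle2 : ∀ (k : Fin n),
      (Pi.single k 1 : Fin n → ℝ) ⬝ᵥ (Pi.single k 1 : Fin n → ℝ) = 1 := by
    intro k
    simp [dotProduct, Pi.single_apply]
  have hval1 : u ⬝ᵥ ((Ahat * Ahatᵀ) *ᵥ u) = σ₁ ^ 2 - 2 * σ₁ * (u i * v j) + u i ^ 2 := by
    rw [rayKey, hATvec]
    have h1 : (Pi.single j 1 : Fin n → ℝ) ⬝ᵥ v = v j := by
      rw [dotProduct_comm]; exact hsingle v j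
    simp only [dotProduct_sub, sub_dotProduct, smul_dotProduct,
      dotProduct_smul, smul_eq_mul, hv, hsingle, h1, Pi.sub_apply, Pi.smul_apply,
      Pi.single_eq_same, mul_one]
    ring
  have hval2 : v ⬝ᵥ ((Ahatᵀ * Ahat) *ᵥ v) = σ₁ ^ 2 - 2 * σ₁ * (u i * v j) + v j ^ 2 := by
    rw [rayKey', hAvec]
    have h1 : (Pi.single i 1 : Fin n → ℝ) ⬝ᵥ u = u i := by
      rw [dotProduct_comm]; exact hsingle u i
    simp only [dotProduct_sub, sub_dotProduct, smul_dotProduct,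
      dotProduct_smul, smul_eq_mul, hu, hsingle, h1, Pi.sub_apply, Pi.smul_apply,
      Pi.single_eq_same, mul_one]
    ring
  have hle1 : σ₁ ^ 2 - 2 * σ₁ * (u i * v j) + u i ^ 2 ≤ s := by
    rw [← hval1]; exact hs.2 ⟨u, hu, rfl⟩
  have hle2 : σ₁ ^ 2 - 2 * σ₁ * (u i * v j) + v j ^ 2 ≤ s := by
    rw [← hval2]; exact hswap.2 ⟨v, hv, rfl⟩
  rcases max_cases (u i ^ 2) (v j ^ 2) with ⟨hm, _⟩ | ⟨hm, _⟩ <;> rw [hm] <;> linarith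
end

section
/- Let A be an n×n real matrix with nonnegative entries, let 𝒜 = [[0, A],[Aᵀ, 0]] be its bipartite lift, let E = exp(𝒜) with n×n blocks E₁₁, E₁₂, E₂₁, E₂₂, and let 1 denote the all-ones vector (of the appropriate size). Then for all indices i, j: (E1)_{i} · (E1)_{n+j} − (E₁₂1)_i · (1ᵀE₁₂)_j = φ(i,j) − (E₁₁1)_i · (E₂₂1)_j, where φ(i,j) = (E1)_i (E₂₂1)_j + (E1)_{n+j} (E₁₁1)_i; moreover this difference is strictly positive, i.e., the edge total communicability centrality of (i, j') in the bipartite graph strictly exceeds the edge total communicability centrality ^egTC(i,j) = (E₁₂1)_i (1ᵀE₁₂)_j of (i,j) in the digraph. -/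
open Matrix

private lemma entry_hasSum {m : Type*} [Fintype m] [DecidableEq m] (M : Matrix m m ℝ) (p q : m) :
    HasSum (fun k : ℕ => (((k.factorial : ℝ))⁻¹ • M ^ k) p q) (NormedSpace.exp M p q) := by
  letI : SeminormedRing (Matrix m m ℝ) := Matrix.linftyOpSemiNormedRing
  letI : NormedRing (Matrix m m ℝ) := Matrix.linftyOpNormedRing
  letI : NormedAlgebra ℝ (Matrix m m ℝ) := Matrix.linftyOpNormedAlgebra
  have h := NormedSpace.exp_series_hasSum_exp' (𝕂 := ℝ) M
  have h1 := (Pi.hasSum.mp h) p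
  exact (Pi.hasSum.mp h1) q

private lemma pow_entry_nonneg {m : Type*} [Fintype m] [DecidableEq m] (M : Matrix m m ℝ)
    (hM : ∀ p q, 0 ≤ M p q) (k : ℕ) : ∀ p q, 0 ≤ (M ^ k) p q := by
  induction k with
  | zero =>
    intro p q
    simp only [pow_zero, Matrix.one_apply]
    split <;> norm_num
  | succ k ih =>
    intro p q
    rw [pow_succ, Matrix.mul_apply]
    exact Finset.sum_nonneg fun r _ => mul_nonneg (ih p r) (hM r q)

private lemma one_le_exp_entry {m : Type*} [Fintype m] [DecidableEq m] (M : Matrix m m ℝ)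
    (hM : ∀ p q, 0 ≤ M p q) (p q : m) :
    (1 : Matrix m m ℝ) p q ≤ NormedSpace.exp M p q := by
  have h := entry_hasSum M p q
  have h0 := le_hasSum h 0 (fun k _ => by
    simp only [Matrix.smul_apply, smul_eq_mul]
    exact mul_nonneg (by positivity) (pow_entry_nonneg M hM k p q))
  simpa using h0

/-- Comparison between the edge total communicability centrality of `(i,j')` in the
bipartite lift and the edge total communicability centrality `^egTC(i,j)` in the digraph:
their difference equals `φ(i,j) − (E₁₁1)_i (E₂₂1)_j` where
`φ(i,j) = (E1)_i (E₂₂1)_j + (E1)_{n+j} (E₁₁1)_i`, and this difference is strictly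
positive. Here `E = exp(𝒜)` with `𝒜 = [[0,A],[Aᵀ,0]]` the bipartite lift of `A ≥ 0`. -/
theorem stmt_14 {n : ℕ} (A : Matrix (Fin n) (Fin n) ℝ) (hA : ∀ p q, 0 ≤ A p q)
    (E : Matrix (Fin n ⊕ Fin n) (Fin n ⊕ Fin n) ℝ)
    (hE : E = NormedSpace.exp (Matrix.fromBlocks 0 A Aᵀ 0))
    (onesN : Fin n → ℝ) (h1 : onesN = fun _ => 1)
    (ones2N : Fin n ⊕ Fin n → ℝ) (h2 : ones2N = fun _ => 1)
    (i j : Fin n) :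
    (E *ᵥ ones2N) (Sum.inl i) * (E *ᵥ ones2N) (Sum.inr j)
        - (E.toBlocks₁₂ *ᵥ onesN) i * (onesN ᵥ* E.toBlocks₁₂) j
      = ((E *ᵥ ones2N) (Sum.inl i) * (E.toBlocks₂₂ *ᵥ onesN) j
          + (E *ᵥ ones2N) (Sum.inr j) * (E.toBlocks₁₁ *ᵥ onesN) i)
        - (E.toBlocks₁₁ *ᵥ onesN) i * (E.toBlocks₂₂ *ᵥ onesN) j ∧
    0 < (E *ᵥ ones2N) (Sum.inl i) * (E *ᵥ ones2N) (Sum.inr j)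
        - (E.toBlocks₁₂ *ᵥ onesN) i * (onesN ᵥ* E.toBlocks₁₂) j := by
  subst h1 h2
  set 𝒜 := Matrix.fromBlocks (0 : Matrix (Fin n) (Fin n) ℝ) A Aᵀ 0 with h𝒜
  have h𝒜nn : ∀ p q, 0 ≤ 𝒜 p q := by
    rintro (p | p) (q | q) <;>
      simp [h𝒜, Matrix.fromBlocks, hA p q, hA q p]
  -- symmetry of E
  have hEs : ∀ p q, E p q = E q p := by
    have hT : Eᵀ = E := by
      rw [hE, ← Matrix.exp_transpose, h𝒜, Matrix.fromBlocks_transpose, Matrix.transpose_zero,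
        Matrix.transpose_transpose]
    intro p q
    conv_lhs => rw [← hT]
    rfl
  have hle : ∀ p q, (1 : Matrix (Fin n ⊕ Fin n) (Fin n ⊕ Fin n) ℝ) p q ≤ E p q := by
    intro p q; rw [hE]; exact one_le_exp_entry 𝒜 h𝒜nn p q
  have hnn : ∀ p q, 0 ≤ E p q := by
    intro p q
    refine le_trans ?_ (hle p q)
    simp only [Matrix.one_apply]; split <;> norm_num
  have hdiag : ∀ p, 1 ≤ E p p := by
    intro p; simpa [Matrix.one_apply] using hle p p
  set a := ∑ k, E (Sum.inl i) (Sum.inl k) with ha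
  set b := ∑ k, E (Sum.inl i) (Sum.inr k) with hb
  set c := ∑ k, E (Sum.inr j) (Sum.inl k) with hc
  set d := ∑ k, E (Sum.inr j) (Sum.inr k) with hd
  have e1 : (E *ᵥ fun _ => (1:ℝ)) (Sum.inl i) = a + b := by
    simp [Matrix.mulVec, dotProduct, Fintype.sum_sum_type, ha, hb]
  have e2 : (E *ᵥ fun _ => (1:ℝ)) (Sum.inr j) = c + d := by
    simp [Matrix.mulVec, dotProduct, Fintype.sum_sum_type, hc, hd]
  have e3 : (E.toBlocks₁₂ *ᵥ fun _ => (1:ℝ)) i = b := by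
    simp [Matrix.mulVec, dotProduct, Matrix.toBlocks₁₂, hb]
  have e4 : ((fun _ => (1:ℝ)) ᵥ* E.toBlocks₁₂) j = c := by
    simp only [Matrix.vecMul, dotProduct, Matrix.toBlocks₁₂, Matrix.of_apply, one_mul, hc]
    exact Finset.sum_congr rfl fun k _ => hEs (Sum.inl k) (Sum.inr j)
  have e5 : (E.toBlocks₁₁ *ᵥ fun _ => (1:ℝ)) i = a := by
    simp [Matrix.mulVec, dotProduct, Matrix.toBlocks₁₁, ha]
  have e6 : (E.toBlocks₂₂ *ᵥ fun _ => (1:ℝ)) j = d := by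
    simp [Matrix.mulVec, dotProduct, Matrix.toBlocks₂₂, hd]
  rw [e1, e2, e3, e4, e5, e6]
  have hb0 : 0 ≤ b := Finset.sum_nonneg fun k _ => hnn _ _
  have hc0 : 0 ≤ c := Finset.sum_nonneg fun k _ => hnn _ _
  have ha1 : 1 ≤ a := le_trans (hdiag (Sum.inl i)) <| by
    refine Finset.single_le_sum (f := fun k => E (Sum.inl i) (Sum.inl k))
      (fun k _ => hnn _ _) (Finset.mem_univ i)
  have hd1 : 1 ≤ d := le_trans (hdiag (Sum.inr j)) <| by
    refine Finset.single_le_sum (f := fun k => E (Sum.inr j) (Sum.inr k))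
      (fun k _ => hnn _ _) (Finset.mem_univ j)
  constructor
  · ring
  · nlinarith [mul_nonneg (le_trans zero_le_one ha1) hc0, mul_nonneg hb0 (le_trans zero_le_one hd1)]
end
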